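/- For every t with t² ≥ 16√6 − 39, the 5×5 matrix A = [[0,1,0,0,0],[(15+t²)/2,0,1,0,0],[0,0,0,1,0],[0,0,0,0,1],[3t⁴+58t²+3,(t⁴+78t²−15)/4,10+6t²,(15+t²)/2,0]] is entrywise nonnegative and has characteristic polynomial (x−(3+t))(x−(3−t))(x+2)³. -/

import Mathlib

open Polynomial

set_option maxHeartbeats 1000000 in
theorem laffey_meehan_realization (t : ℝ) (ht : t ^ 2 ≥ 16 * Real.sqrt 6 - 39) :
    let A : Matrix (Fin 5) (Fin 5) ℝ :=
      !![0, 1, 0, 0, 0;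
         (15 + t ^ 2) / 2, 0, 1, 0, 0;
         0, 0, 0, 1, 0;
         0, 0, 0, 0, 1;
         3 * t ^ 4 + 58 * t ^ 2 + 3, (t ^ 4 + 78 * t ^ 2 - 15) / 4,
           10 + 6 * t ^ 2, (15 + t ^ 2) / 2, 0]
    (∀ i j, 0 ≤ A i j) ∧
      A.charpoly = (X - C (3 + t)) * (X - C (3 - t)) * (X + C 2) ^ 3 := by
  intro A
  have hs6 : Real.sqrt 6 ^ 2 = 6 := Real.sq_sqrt (by norm_num)
  have hs6' : (0:ℝ) ≤ Real.sqrt 6 := Real.sqrt_nonneg 6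
  constructor
  · intro i j
    fin_cases i <;> fin_cases j <;> simp [A] <;>
      nlinarith [sq_nonneg t, sq_nonneg (t^2 + 39 - 16 * Real.sqrt 6), sq_nonneg (t^2)]
  · rw [Matrix.charpoly]
    apply Polynomial.funext
    intro x
    rw [show (Polynomial.eval x : ℝ[X] → ℝ) = (Polynomial.evalRingHom x : ℝ[X] →+* ℝ) from rfl,
      RingHom.map_det]
    have hM : (A.charmatrix).map (Polynomial.evalRingHom x) =
        !![x, -1, 0, 0, 0;
           -((15 + t ^ 2) / 2), x, -1, 0, 0;
           0, 0, x, -1, 0;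
           0, 0, 0, x, -1;
           -(3 * t ^ 4 + 58 * t ^ 2 + 3), -((t ^ 4 + 78 * t ^ 2 - 15) / 4),
             -(10 + 6 * t ^ 2), -((15 + t ^ 2) / 2), x] := by
      ext i j
      fin_cases i <;> fin_cases j <;>
        simp [A, Matrix.charmatrix_apply_eq, Matrix.charmatrix_apply_ne]
    rw [RingHom.mapMatrix_apply, hM]
    simp [Matrix.det_succ_row_zero, Fin.sum_univ_succ, Matrix.det_fin_one, Fin.succAbove, Fin.ext_iff]
    ring
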